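/- arXiv:1312.7840 — 3 statements merged into one kernel-verified Lean document; each statement's English description precedes it below -/
import Mathlib

section
/- For every λ > 0, the soft-threshold risk at zero R(0,λ) = E(|Z| - λ)_+^2, where Z is standard normal, satisfies 4Φ(-λ)/(λ² + 5) ≤ R(0,λ) ≤ 4Φ(-λ)/(λ² + 2), where Φ is the standard normal CDF. -/
open MeasureTheory Set
open Real Filter Topology

noncomputable def stdPDF (x : ℝ) : ℝ := Real.exp (-x^2/2) / Real.sqrt (2*Real.pi)

noncomputable def stdCDF (t : ℝ) : ℝ := ∫ x in Set.Iic t, stdPDF x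

lemma stdPDF_pos (x : ℝ) : 0 < stdPDF x := by
  unfold stdPDF
  positivity

lemma continuous_stdPDF : Continuous stdPDF := by
  unfold stdPDF
  fun_prop

lemma stdPDF_neg (x : ℝ) : stdPDF (-x) = stdPDF x := by
  simp [stdPDF, neg_sq]

lemma stdPDF_eq (x : ℝ) : stdPDF x = Real.exp (-(1/2) * x^2) * (Real.sqrt (2*Real.pi))⁻¹ := by
  rw [stdPDF]; ring_nf

lemma integrable_pow_stdPDF (n : ℕ) : Integrable (fun x => x ^ n * stdPDF x) := by
  have h := integrable_rpow_mul_exp_neg_mul_sq (b := 1/2) (by norm_num : (0:ℝ) < 1/2)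
    (s := (n:ℝ)) (lt_of_lt_of_le (by norm_num) (Nat.cast_nonneg n))
  have h2 : Integrable (fun x : ℝ => x ^ n * Real.exp (-(1/2) * x^2)) := by
    simpa [Real.rpow_natCast] using h
  simpa [stdPDF_eq, mul_assoc] using h2.mul_const (Real.sqrt (2*Real.pi))⁻¹

lemma integrable_stdPDF : Integrable stdPDF := by
  simpa using integrable_pow_stdPDF 0

lemma hasDerivAt_stdPDF (x : ℝ) : HasDerivAt stdPDF (-(x * stdPDF x)) x := by
  have h1 : HasDerivAt (fun x : ℝ => -x^2/2) (-x) x := by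
    have := (hasDerivAt_pow 2 x).neg.div_const 2
    norm_num at this
    exact this.congr_deriv (by ring)
  have h2 := (h1.exp).div_const (Real.sqrt (2*Real.pi))
  exact h2.congr_deriv (by unfold stdPDF; ring)

lemma hasDerivAt_stdCDF (x : ℝ) : HasDerivAt stdCDF (stdPDF x) x := by
  have hfun : stdCDF = fun t => stdCDF 0 + ∫ u in (0:ℝ)..t, stdPDF u := by
    funext t
    have := intervalIntegral.integral_Iic_sub_Iic (f := stdPDF) (μ := volume) (a := (0:ℝ)) (b := t)
      integrable_stdPDF.integrableOn integrable_stdPDF.integrableOn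
    unfold stdCDF
    linarith [this]
  rw [hfun]
  exact ((continuous_stdPDF.integral_hasStrictDerivAt 0 x).hasDerivAt).const_add _

lemma stdCDF_neg_eq (t : ℝ) : stdCDF (-t) = ∫ x in Set.Ioi t, stdPDF x := by
  unfold stdCDF
  have : ∀ x, stdPDF x = stdPDF (-x) := fun x => (stdPDF_neg x).symm
  calc ∫ x in Set.Iic (-t), stdPDF x = ∫ x in Set.Iic (-t), stdPDF (-x) := by
        simp_rw [stdPDF_neg]
    _ = ∫ x in Set.Ioi t, stdPDF x := by rw [integral_comp_neg_Iic]; norm_num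

lemma tendsto_pow_stdPDF (n : ℕ) : Tendsto (fun x => x ^ n * stdPDF x) atTop (𝓝 0) := by
  have h := (rpow_mul_exp_neg_mul_sq_isLittleO_exp_neg (b := 1/2) (by norm_num) ((n:ℝ)))
  have h0 : Tendsto (fun x : ℝ => Real.exp (-(1/2) * x)) atTop (𝓝 0) := by
    rw [Real.tendsto_exp_comp_nhds_zero]
    exact (tendsto_id (α := ℝ)).const_mul_atTop_of_neg (by norm_num)
  have h1 : Tendsto (fun x : ℝ => x ^ n * Real.exp (-(1/2) * x^2)) atTop (𝓝 0) := by
    have := h.tendsto_zero_of_tendsto h0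
    simpa [Real.rpow_natCast] using this
  have h2 := h1.mul_const (Real.sqrt (2*Real.pi))⁻¹
  simp only [zero_mul] at h2
  refine h2.congr fun x => ?_
  rw [stdPDF_eq]; ring

lemma tendsto_stdPDF : Tendsto stdPDF atTop (𝓝 0) := by
  simpa using tendsto_pow_stdPDF 0

lemma tendsto_stdCDF_neg : Tendsto (fun t => stdCDF (-t)) atTop (𝓝 0) := by
  have hcov : AECover (volume : Measure ℝ) atTop (fun t : ℝ => Iic t) :=
    aecover_Iic tendsto_id
  have hIic : Tendsto (fun t : ℝ => ∫ x in Iic t, stdPDF x) atTop (𝓝 (∫ x, stdPDF x)) :=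
    hcov.integral_tendsto_of_countably_generated integrable_stdPDF
  have heq : ∀ t : ℝ, stdCDF (-t) = (∫ x, stdPDF x) - ∫ x in Iic t, stdPDF x := by
    intro t
    rw [stdCDF_neg_eq]
    have := intervalIntegral.integral_Iic_add_Ioi (b := t) integrable_stdPDF.integrableOn
      integrable_stdPDF.integrableOn
    linarith
  simp_rw [heq]
  have h := (tendsto_const_nhds (x := ∫ x, stdPDF x) (f := atTop)).sub hIic
  simpa using h

lemma hasDerivAt_stdCDF_neg (x : ℝ) : HasDerivAt (fun t => stdCDF (-t)) (-stdPDF x) x := by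
  have h := (hasDerivAt_stdCDF (-x)).comp x (hasDerivAt_neg x)
  exact h.congr_deriv (by simp [stdPDF_neg])

lemma key_id (lam : ℝ) :
    ∫ x in Set.Ioi lam, (x - lam)^2 * stdPDF x
      = (lam^2+1) * stdCDF (-lam) - lam * stdPDF lam := by
  set G : ℝ → ℝ := fun x => -(x - 2*lam) * stdPDF x - (lam^2+1) * stdCDF (-x) with hG
  have hderiv : ∀ x ∈ Ici lam, HasDerivAt G ((x - lam)^2 * stdPDF x) x := by
    intro x _
    have h1 : HasDerivAt (fun x => -(x - 2*lam) * stdPDF x)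
        (-1 * stdPDF x + -(x - 2*lam) * -(x * stdPDF x)) x :=
      (((hasDerivAt_id x).sub_const _).neg).mul (hasDerivAt_stdPDF x)
    have h2 := (hasDerivAt_stdCDF_neg x).const_mul (lam^2+1)
    have h3 := h1.sub h2
    refine h3.congr_deriv ?_
    have hp := stdPDF_pos x
    ring
  have hint : IntegrableOn (fun x => (x - lam)^2 * stdPDF x) (Ioi lam) := by
    have : (fun x : ℝ => (x - lam)^2 * stdPDF x)
        = fun x => x^2 * stdPDF x - (2*lam) * (x^1 * stdPDF x) + lam^2 * (x^0 * stdPDF x) := by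
      funext x; ring
    rw [this]
    exact (((integrable_pow_stdPDF 2).sub ((integrable_pow_stdPDF 1).const_mul _)).add
      ((integrable_pow_stdPDF 0).const_mul _)).integrableOn
  have htend : Tendsto G atTop (𝓝 0) := by
    have h1 := tendsto_pow_stdPDF 1
    have h2 := tendsto_stdPDF
    have h3 := tendsto_stdCDF_neg
    have : Tendsto (fun x : ℝ => -(x^1 * stdPDF x) + 2*lam * stdPDF x - (lam^2+1) * stdCDF (-x))
        atTop (𝓝 (-(0:ℝ) + 2*lam*0 - (lam^2+1)*0)) :=
      ((h1.neg.add (h2.const_mul _)).sub (h3.const_mul _))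
    simp only [neg_zero, mul_zero, add_zero, sub_zero, zero_add] at this
    refine this.congr fun x => ?_
    simp only [hG]; ring
  have := integral_Ioi_of_hasDerivAt_of_tendsto' hderiv hint htend
  rw [this]
  simp only [hG]
  ring

lemma nonneg_of_deriv_tendsto (f f' : ℝ → ℝ) (a : ℝ)
    (hd : ∀ x ∈ Ici a, HasDerivAt f (f' x) x)
    (hneg : ∀ x ∈ Ioi a, f' x ≤ 0)
    (hlim : Tendsto f atTop (𝓝 0)) : 0 ≤ f a := by
  have hanti : AntitoneOn f (Ici a) := by
    apply antitoneOn_of_deriv_nonpos (convex_Ici a)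
    · exact fun x hx => (hd x hx).continuousAt.continuousWithinAt
    · intro x hx
      rw [interior_Ici] at hx
      exact (hd x (mem_Ici.mpr (le_of_lt hx))).differentiableAt.differentiableWithinAt
    · intro x hx
      rw [interior_Ici] at hx
      rw [(hd x (mem_Ici.mpr (le_of_lt hx))).deriv]
      exact hneg x hx
  refine le_of_tendsto hlim ?_
  filter_upwards [eventually_ge_atTop a] with b hb
  exact hanti self_mem_Ici hb hb

lemma mills_upper {lam : ℝ} (hlam : 0 < lam) :
    stdCDF (-lam) ≤ (lam^2+2) / (lam^3+3*lam) * stdPDF lam := by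
  set f : ℝ → ℝ := fun t => (t^2+2) / (t^3+3*t) * stdPDF t - stdCDF (-t) with hf
  set f' : ℝ → ℝ := fun t => -(6 * stdPDF t / (t^2 * (t^2+3)^2)) with hf'
  have key : 0 ≤ f lam := by
    apply nonneg_of_deriv_tendsto f f' lam
    · intro t ht
      have ht0 : 0 < t := lt_of_lt_of_le hlam ht
      have hD : t^3 + 3*t ≠ 0 := ne_of_gt (by nlinarith [pow_pos ht0 3])
      have h1 : HasDerivAt (fun t : ℝ => (t^2+2) / (t^3+3*t))
          (((2*t) * (t^3+3*t) - (t^2+2) * (3*t^2+3)) / (t^3+3*t)^2) t := by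
        have hn : HasDerivAt (fun t : ℝ => t^2+2) (2*t) t := by
          simpa using (hasDerivAt_pow 2 t).add_const 2
        have hd2 : HasDerivAt (fun t : ℝ => t^3+3*t) (3*t^2+3) t := by
          have := (hasDerivAt_pow 3 t).add ((hasDerivAt_id t).const_mul 3)
          exact this.congr_deriv (by norm_num)
        exact hn.div hd2 hD
      have h2 := h1.mul (hasDerivAt_stdPDF t)
      have h3 := h2.sub (hasDerivAt_stdCDF_neg t)
      refine h3.congr_deriv ?_
      simp only [hf']
      have hp := stdPDF_pos t
      field_simp
      ring
    · intro t ht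
      have ht0 : 0 < t := hlam.trans ht
      have hp := stdPDF_pos t
      simp only [hf']
      apply neg_nonpos.mpr
      positivity
    · have hnum : Tendsto (fun t : ℝ => t^2 * stdPDF t + 2 * stdPDF t) atTop (𝓝 0) := by
        have := (tendsto_pow_stdPDF 2).add (tendsto_stdPDF.const_mul 2)
        simpa using this
      have hsq : Tendsto (fun t : ℝ => (t^2+2) / (t^3+3*t) * stdPDF t) atTop (𝓝 0) := by
        apply squeeze_zero' (g := fun t : ℝ => t^2 * stdPDF t + 2 * stdPDF t)
        · filter_upwards [eventually_ge_atTop (1:ℝ)] with t ht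
          have hp := (stdPDF_pos t).le
          positivity
        · filter_upwards [eventually_ge_atTop (1:ℝ)] with t ht
          have hp := (stdPDF_pos t).le
          have hD : (1:ℝ) ≤ t^3 + 3*t := by
            nlinarith [mul_nonneg (mul_nonneg (by linarith : (0:ℝ) ≤ t) (by linarith : (0:ℝ) ≤ t-1)) (by linarith : (0:ℝ) ≤ t+1)]
          have h1 : (t^2+2) / (t^3+3*t) ≤ t^2+2 := by
            rw [div_le_iff₀ (by linarith)]
            nlinarith
          calc (t^2+2) / (t^3+3*t) * stdPDF t ≤ (t^2+2) * stdPDF t :=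
                mul_le_mul_of_nonneg_right h1 hp
            _ = t^2 * stdPDF t + 2 * stdPDF t := by ring
        · exact hnum
      have := hsq.sub tendsto_stdCDF_neg
      simpa [hf] using this
  simp only [hf] at key
  linarith

lemma mills_lower {lam : ℝ} (hlam : 0 < lam) :
    lam*(lam^2+5) / (lam^4+6*lam^2+3) * stdPDF lam ≤ stdCDF (-lam) := by
  set f : ℝ → ℝ := fun t => stdCDF (-t) - t*(t^2+5) / (t^4+6*t^2+3) * stdPDF t with hf
  set f' : ℝ → ℝ := fun t => -(24 * stdPDF t / (t^4+6*t^2+3)^2) with hf'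
  have key : 0 ≤ f lam := by
    apply nonneg_of_deriv_tendsto f f' lam
    · intro t ht
      have hD : t^4 + 6*t^2 + 3 ≠ 0 := by positivity
      have h1 : HasDerivAt (fun t : ℝ => t*(t^2+5) / (t^4+6*t^2+3))
          (((3*t^2+5) * (t^4+6*t^2+3) - t*(t^2+5) * (4*t^3+12*t)) / (t^4+6*t^2+3)^2) t := by
        have hn : HasDerivAt (fun t : ℝ => t*(t^2+5)) (3*t^2+5) t := by
          have := (hasDerivAt_id t).mul ((hasDerivAt_pow 2 t).add_const 5)
          refine this.congr_deriv ?_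
          simp only [id_eq]
          push_cast
          ring
        have hd2 : HasDerivAt (fun t : ℝ => t^4+6*t^2+3) (4*t^3+12*t) t := by
          have := ((hasDerivAt_pow 4 t).add ((hasDerivAt_pow 2 t).const_mul 6)).add_const 3
          refine this.congr_deriv ?_
          push_cast
          ring
        exact hn.div hd2 hD
      have h2 := h1.mul (hasDerivAt_stdPDF t)
      have h3 := (hasDerivAt_stdCDF_neg t).sub h2
      refine h3.congr_deriv ?_
      simp only [hf']
      have hp := stdPDF_pos t
      have hDpos : (0:ℝ) < t^4 + 6*t^2 + 3 := by positivity
      field_simp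
      ring
    · intro t ht
      have hp := stdPDF_pos t
      simp only [hf']
      apply neg_nonpos.mpr
      positivity
    · have hnum : Tendsto (fun t : ℝ => (t^3 * stdPDF t + 5 * (t^1 * stdPDF t)) / 3) atTop (𝓝 0) := by
        have := ((tendsto_pow_stdPDF 3).add ((tendsto_pow_stdPDF 1).const_mul 5)).div_const 3
        simpa using this
      have hsq : Tendsto (fun t : ℝ => t*(t^2+5) / (t^4+6*t^2+3) * stdPDF t) atTop (𝓝 0) := by
        apply squeeze_zero' (g := fun t : ℝ => (t^3 * stdPDF t + 5 * (t^1 * stdPDF t)) / 3)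
        · filter_upwards [eventually_ge_atTop (0:ℝ)] with t ht
          have hp := (stdPDF_pos t).le
          positivity
        · filter_upwards [eventually_ge_atTop (0:ℝ)] with t ht
          have hp := (stdPDF_pos t).le
          have hD : (3:ℝ) ≤ t^4 + 6*t^2 + 3 := by nlinarith
          have h1 : t*(t^2+5) / (t^4+6*t^2+3) ≤ t*(t^2+5) / 3 := by
            apply div_le_div_of_nonneg_left _ (by norm_num) hD
            nlinarith
          calc t*(t^2+5) / (t^4+6*t^2+3) * stdPDF t ≤ t*(t^2+5)/3 * stdPDF t :=
                mul_le_mul_of_nonneg_right h1 hp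
            _ = (t^3 * stdPDF t + 5 * (t^1 * stdPDF t)) / 3 := by ring
        · exact hnum
      have := tendsto_stdCDF_neg.sub hsq
      simpa [hf] using this
  simp only [hf] at key
  linarith

/-- Risk of soft thresholding at the origin: R(0,λ) = E(|Z|-λ)_+² = 2∫_λ^∞ (x-λ)² φ(x) dx. -/
noncomputable def R0 (lam : ℝ) : ℝ := 2 * ∫ x in Set.Ioi lam, (x - lam)^2 * stdPDF x

theorem stmt0 (lam : ℝ) (hlam : 0 < lam) :
    4 * stdCDF (-lam) / (lam^2 + 5) ≤ R0 lam ∧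
    R0 lam ≤ 4 * stdCDF (-lam) / (lam^2 + 2) := by
  have hR : R0 lam = 2 * ((lam^2+1) * stdCDF (-lam) - lam * stdPDF lam) := by
    rw [R0, key_id]
  set A := stdCDF (-lam) with hA
  set p := stdPDF lam with hp
  have hppos : 0 < p := stdPDF_pos lam
  have hml := mills_lower hlam
  have hmu := mills_upper hlam
  have hDpos : (0:ℝ) < lam^4+6*lam^2+3 := by positivity
  have hD2pos : (0:ℝ) < lam^3+3*lam := by nlinarith [pow_pos hlam 3]
  have hml' : lam*(lam^2+5) * p ≤ (lam^4+6*lam^2+3) * A := by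
    rw [div_mul_eq_mul_div, div_le_iff₀ hDpos] at hml
    linarith
  have hmu' : (lam^3+3*lam) * A ≤ (lam^2+2) * p := by
    rw [div_mul_eq_mul_div, le_div_iff₀ hD2pos] at hmu
    linarith
  have hAnn : 0 ≤ A := by nlinarith
  constructor
  · rw [hR, div_le_iff₀ (by positivity)]
    nlinarith
  · rw [hR, le_div_iff₀ (by positivity)]
    nlinarith [mul_nonneg hlam.le (sub_nonneg.mpr hmu')]
end

section
/- Let 1 ≤ κ₀ < 2, let s_λ(x) = sgn(x)(|x|-λ)_+ and f_λ(x) = sgn(x) min(|x|, κ₀(|x|-λ)_+), and suppose t_λ: ℝ → ℝ satisfies s_λ(x) ≤ t_λ(x) ≤ f_λ(x) for x ≥ 0 and f_λ(x) ≤ t_λ(x) ≤ s_λ(x) for x < 0. Then for all μ ∈ ℝ, x ∈ ℝ and λ ≥ 0, |t_λ(x) - μ| ≤ max(|μ|, C₀(|x-μ|-λ)_+), where C₀ = κ₀/(2-κ₀). -/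
/-- Soft threshold s_λ(x) = sgn(x)(|x|-λ)_+. -/
noncomputable def soft (lam x : ℝ) : ℝ := Real.sign x * max (|x| - lam) 0

/-- Firm threshold f_λ(x) = sgn(x) min(|x|, κ₀(|x|-λ)_+). -/
noncomputable def firm (k0 lam x : ℝ) : ℝ := Real.sign x * min |x| (k0 * max (|x| - lam) 0)

lemma keyA (k0 C lam x mu t : ℝ) (hk0 : 1 ≤ k0) (hk0' : k0 < 2) (hC : C = k0/(2-k0))
    (hlam : 0 ≤ lam) (hx : 0 ≤ x)
    (h1 : max (x - lam) 0 ≤ t) (h2 : t ≤ min x (k0 * max (x - lam) 0)) :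
    |t - mu| ≤ max |mu| (C * max (|x - mu| - lam) 0) := by
  have h2k : (0:ℝ) < 2 - k0 := by linarith
  have hCk : C * (2 - k0) = k0 := by rw [hC]; field_simp
  have hC1 : 1 ≤ C := by nlinarith
  have hkC : k0 ≤ C := by nlinarith
  have hmu : mu ≤ |mu| := le_abs_self mu
  have hmu' : -mu ≤ |mu| := neg_le_abs mu
  have habs : |x - mu| - lam ≤ max (|x - mu| - lam) 0 := le_max_left _ _
  have habs0 : 0 ≤ max (|x - mu| - lam) 0 := le_max_right _ _
  rw [abs_sub_le_iff]
  rcases le_or_gt x lam with hxl | hxl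
  · -- s = 0, so t = 0
    have hs : max (x - lam) 0 = 0 := max_eq_right (by linarith)
    rw [hs] at h1 h2
    have ht : t = 0 := le_antisymm (le_trans h2 (by simp)) h1
    constructor
    · calc t - mu = -mu := by rw [ht]; ring
        _ ≤ |mu| := hmu'
        _ ≤ _ := le_max_left _ _
    · calc mu - t = mu := by rw [ht]; ring
        _ ≤ |mu| := hmu
        _ ≤ _ := le_max_left _ _
  · have hs : max (x - lam) 0 = x - lam := max_eq_left (by linarith)
    rw [hs] at h1 h2
    have h2' : t ≤ k0 * (x - lam) := le_trans h2 (min_le_right _ _)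
    constructor
    · -- t - mu ≤ max
      rcases le_or_gt (x - mu) lam with hd | hd
      · -- x - lam ≤ mu, so mu > 0
        have hmupos : 0 < mu := by linarith
        have : t - mu ≤ |mu| := by nlinarith
        exact le_trans this (le_max_left _ _)
      · -- d > lam
        have habs2 : |x - mu| = x - mu := abs_of_pos (by linarith)
        have hmax2 : max (|x - mu| - lam) 0 = x - mu - lam := by
          rw [habs2]; exact max_eq_left (by linarith)
        rcases le_or_gt (|mu|) (C * (x - mu - lam)) with hm | hm
        · refine le_trans ?_ (le_max_right _ _)
          rw [hmax2]
          have hmu2 : mu ≤ C * (x - mu - lam) := le_trans hmu hm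
          rcases le_or_gt mu 0 with h0 | h0
          · nlinarith
          · nlinarith
        · refine le_trans ?_ (le_max_left _ _)
          rcases le_or_gt mu 0 with h0 | h0
          · have : |mu| = -mu := abs_of_nonpos h0
            nlinarith
          · have : |mu| = mu := abs_of_pos h0
            nlinarith
    · -- mu - t ≤ max
      have : mu - t ≤ mu - (x - lam) := by linarith
      have : mu - t ≤ |mu| := by linarith
      exact le_trans this (le_max_left _ _)

lemma soft_nonneg_eq (lam x : ℝ) (hlam : 0 ≤ lam) (hx : 0 ≤ x) :
    soft lam x = max (x - lam) 0 := by
  rcases eq_or_lt_of_le hx with h | h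
  · simp [soft, ← h, max_eq_right (by linarith : -lam ≤ (0:ℝ))]
  · simp [soft, Real.sign_of_pos h, abs_of_pos h]

lemma firm_nonneg_eq (k0 lam x : ℝ) (hlam : 0 ≤ lam) (hx : 0 ≤ x) :
    firm k0 lam x = min x (k0 * max (x - lam) 0) := by
  rcases eq_or_lt_of_le hx with h | h
  · simp [firm, ← h, max_eq_right (by linarith : -lam ≤ (0:ℝ))]
  · simp [firm, Real.sign_of_pos h, abs_of_pos h]

lemma soft_neg (lam x : ℝ) : soft lam (-x) = - soft lam x := by
  simp [soft, Real.sign_neg]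

lemma firm_neg (k0 lam x : ℝ) : firm k0 lam (-x) = - firm k0 lam x := by
  simp [firm, Real.sign_neg]

theorem stmt13 (k0 : ℝ) (hk0 : 1 ≤ k0) (hk0' : k0 < 2) (tfun : ℝ → ℝ) (lam : ℝ) (hlam : 0 ≤ lam)
    (hsand1 : ∀ x : ℝ, 0 ≤ x → soft lam x ≤ tfun x ∧ tfun x ≤ firm k0 lam x)
    (hsand2 : ∀ x : ℝ, x < 0 → firm k0 lam x ≤ tfun x ∧ tfun x ≤ soft lam x) :
    ∀ (mu x : ℝ), |tfun x - mu| ≤ max |mu| (k0/(2-k0) * max (|x - mu| - lam) 0) := by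
  intro mu x
  rcases le_or_gt 0 x with hx | hx
  · obtain ⟨h1, h2⟩ := hsand1 x hx
    rw [soft_nonneg_eq lam x hlam hx] at h1
    rw [firm_nonneg_eq k0 lam x hlam hx] at h2
    exact keyA k0 _ lam x mu (tfun x) hk0 hk0' rfl hlam hx h1 h2
  · obtain ⟨h1, h2⟩ := hsand2 x hx
    have hx' : (0:ℝ) ≤ -x := by linarith
    have e1 : max (-x - lam) 0 ≤ -(tfun x) := by
      have := soft_nonneg_eq lam (-x) hlam hx'
      rw [soft_neg] at this
      linarith [h2, this.symm.le]
    have e2 : -(tfun x) ≤ min (-x) (k0 * max (-x - lam) 0) := by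
      have := firm_nonneg_eq k0 lam (-x) hlam hx'
      rw [firm_neg] at this
      linarith [h1, this.le]
    have key := keyA k0 _ lam (-x) (-mu) (-(tfun x)) hk0 hk0' rfl hlam hx' e1 e2
    have eq1 : |-(tfun x) - -mu| = |tfun x - mu| := by
      rw [show -(tfun x) - -mu = -(tfun x - mu) by ring, abs_neg]
    have eq2 : |-x - -mu| = |x - mu| := by
      rw [show -x - -mu = -(x - mu) by ring, abs_neg]
    rw [eq1, eq2] at key
    rw [show |-mu| = |mu| from abs_neg mu] at key
    exact key
end

section
/- Let t_λ be any threshold function sandwiched between soft and firm thresholds as above (s_λ ≤ t_λ ≤ f_λ on x ≥ 0, f_λ ≤ t_λ ≤ s_λ on x < 0, with κ₀ ∈ [1,2)). If X is a random variable with EX = μ and finite variance, then E(t_λ(X) - μ)² ≤ λ² + 2 Var(X) for every λ ≥ 0. -/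
open MeasureTheory

/-- soft threshold equals x minus the clamp of x to [-lam, lam]. -/
lemma soft_eq_sub_clamp (lam : ℝ) (hlam : 0 ≤ lam) (x : ℝ) :
    soft lam x = x - max (min x lam) (-lam) := by
  unfold soft
  rcases lt_trichotomy x 0 with h | h | h
  · rw [Real.sign_of_neg h, abs_of_neg h]
    rcases le_total (-lam) x with h2 | h2
    · rw [max_eq_right (show -x - lam ≤ 0 by linarith),
        min_eq_left (show x ≤ lam by linarith), max_eq_left h2]
      ring
    · rw [max_eq_left (show (0:ℝ) ≤ -x - lam by linarith),
        min_eq_left (show x ≤ lam by linarith), max_eq_right h2]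
      ring
  · subst h
    rw [Real.sign_zero, zero_mul, min_eq_left hlam,
      max_eq_left (show -lam ≤ (0:ℝ) by linarith)]
    ring
  · rw [Real.sign_of_pos h, abs_of_pos h]
    rcases le_total x lam with h2 | h2
    · rw [max_eq_right (show x - lam ≤ 0 by linarith), min_eq_left h2,
        max_eq_left (show -lam ≤ x by linarith)]
      ring
    · rw [max_eq_left (show (0:ℝ) ≤ x - lam by linarith), min_eq_right h2,
        max_eq_left (show -lam ≤ lam by linarith)]
      ring

/-- firm threshold is between 0 and identity (on the appropriate side): for x ≥ 0, firm ≤ x. -/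
lemma firm_le_self (k0 lam x : ℝ) (hx : 0 ≤ x) : firm k0 lam x ≤ x := by
  unfold firm
  rcases eq_or_lt_of_le hx with h | h
  · rw [← h, Real.sign_zero]; simp
  · rw [Real.sign_of_pos h, abs_of_pos h, one_mul]
    exact min_le_left _ _

lemma self_le_firm (k0 lam x : ℝ) (hx : x < 0) : x ≤ firm k0 lam x := by
  unfold firm
  rw [Real.sign_of_neg hx, abs_of_neg hx]
  have : min (-x) (k0 * max (-x - lam) 0) ≤ -x := min_le_left _ _
  linarith

theorem stmt14 {Ω : Type*} [MeasurableSpace Ω] (P : Measure Ω) [IsProbabilityMeasure P]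
    (k0 : ℝ) (hk0 : 1 ≤ k0) (hk0' : k0 < 2) (tfun : ℝ → ℝ) (lam : ℝ) (hlam : 0 ≤ lam)
    (hsand1 : ∀ x : ℝ, 0 ≤ x → soft lam x ≤ tfun x ∧ tfun x ≤ firm k0 lam x)
    (hsand2 : ∀ x : ℝ, x < 0 → firm k0 lam x ≤ tfun x ∧ tfun x ≤ soft lam x)
    (X : Ω → ℝ) (hXm : Measurable X) (hX2 : MemLp X 2 P)
    (mu : ℝ) (hmu : ∫ ω, X ω ∂P = mu) :
    ∫ ω, (tfun (X ω) - mu)^2 ∂P ≤ lam^2 + 2 * ∫ ω, (X ω - mu)^2 ∂P := by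
  set c : ℝ := max (min mu lam) (-lam) with hc
  -- pointwise key inequality
  have key : ∀ x : ℝ, (tfun x - mu)^2 ≤ lam^2 + 2*(x-mu)^2 - 2*c*(x-mu) := by
    intro x
    set G : ℝ := max (min x lam) (-lam) with hG
    have hsoft : soft lam x = x - G := soft_eq_sub_clamp lam hlam x
    have hGsq : G^2 ≤ lam^2 := by
      have h1 : -lam ≤ G := le_max_right _ _
      have h2 : G ≤ lam := max_le (min_le_right _ _) (by linarith)
      nlinarith
    have hmono : 0 ≤ (G - c) * (x - mu) := by
      have hM : Monotone fun y : ℝ => max (min y lam) (-lam) :=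
        (monotone_id.min monotone_const).max monotone_const
      rcases le_total x mu with h | h
      · have h1 : G ≤ c := hM h
        nlinarith [mul_nonneg (sub_nonneg.mpr h1) (sub_nonneg.mpr h)]
      · have : c ≤ G := hM h
        exact mul_nonneg (by linarith) (by linarith)
    have hbetween : (tfun x - soft lam x) * (tfun x - x) ≤ 0 := by
      rcases le_or_gt 0 x with h | h
      · obtain ⟨h1, h2⟩ := hsand1 x h
        have h3 : tfun x ≤ x := h2.trans (firm_le_self k0 lam x h)
        exact mul_nonpos_of_nonneg_of_nonpos (by linarith) (by linarith)
      · obtain ⟨h1, h2⟩ := hsand2 x h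
        have h3 : x ≤ tfun x := (self_le_firm k0 lam x h).trans h1
        exact mul_nonpos_of_nonpos_of_nonneg (by linarith) (by linarith)
    rw [hsoft] at hbetween
    nlinarith [hbetween, sq_nonneg ((x - G) + x - tfun x - mu), hGsq, hmono]
  -- integrability facts
  have hXi : Integrable X P := hX2.integrable one_le_two
  have hsq : Integrable (fun ω => (X ω - mu)^2) P :=
    (hX2.sub (memLp_const mu)).integrable_sq
  have hXmu : Integrable (fun ω => X ω - mu) P := hXi.sub (integrable_const mu)
  have hzero : ∫ ω, (X ω - mu) ∂P = 0 := by
    rw [integral_sub hXi (integrable_const mu), integral_const, probReal_univ, hmu]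
    simp
  have hsqnn : 0 ≤ ∫ ω, (X ω - mu)^2 ∂P := integral_nonneg fun ω => sq_nonneg _
  by_cases hint : Integrable (fun ω => (tfun (X ω) - mu)^2) P
  · have hA : Integrable (fun ω => lam^2 + 2*(X ω - mu)^2) P :=
      (integrable_const _).add (hsq.const_mul 2)
    have hB : Integrable (fun ω => 2*c*(X ω - mu)) P := hXmu.const_mul (2*c)
    have hC : Integrable (fun ω => 2*(X ω - mu)^2) P := hsq.const_mul 2
    have hF : Integrable (fun ω => lam^2 + 2*(X ω - mu)^2 - 2*c*(X ω - mu)) P := hA.sub hB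
    calc ∫ ω, (tfun (X ω) - mu)^2 ∂P
        ≤ ∫ ω, (lam^2 + 2*(X ω - mu)^2 - 2*c*(X ω - mu)) ∂P :=
          integral_mono hint hF fun ω => key (X ω)
      _ = lam^2 + 2 * ∫ ω, (X ω - mu)^2 ∂P := by
          rw [integral_sub hA hB, integral_add (integrable_const (lam^2)) hC, integral_const,
            probReal_univ, integral_const_mul, integral_const_mul, hzero]
          simp
  · rw [integral_undef hint]
    nlinarith [sq_nonneg lam]
end
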